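/- Let h : ℝ^d → ℝ be continuously differentiable with L_h-Lipschitz continuous gradient and let σ : ℝ^d → (−∞,∞] be proper, lower semicontinuous, convex and with inf σ > −∞. Let t > 0, let v, w ∈ dom σ, and let u⁺ ∈ prox_t^σ(v − (1/t)∇h(w)). Then for every u ∈ dom σ and every s > 0, with g := h + σ, one has the tighter bound g(u⁺) ≤ g(u) + ((L_h + s − t)/2)‖u⁺ − u‖² + (t/2)‖u − v‖² − (t/2)‖u⁺ − v‖² + (L_h²/(2s))‖u − w‖². -/

import Mathlib

open scoped RealInnerProductSpace

section Aux

variable {E : Type*} [NormedAddCommGroup E] [InnerProductSpace ℝ E]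

lemma stmt2_combo_norm (x y p : E) (a : ℝ) :
    ‖((1-a) • x + a • y) - p‖ ^ 2
      = (1-a) * ‖x - p‖ ^ 2 + a * ‖y - p‖ ^ 2 - a * (1-a) * ‖x - y‖ ^ 2 := by
  have hrw : ((1-a) • x + a • y) - p = (1-a) • (x - p) + a • (y - p) := by module
  rw [hrw]
  have e1 : x - y = (x - p) - (y - p) := by abel
  rw [e1]
  simp only [← real_inner_self_eq_norm_sq]
  simp only [inner_add_left, inner_add_right, inner_sub_left, inner_sub_right,
    real_inner_smul_left, real_inner_smul_right, real_inner_comm (x - p) (y - p)]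
  ring

lemma stmt2_shift_norm (x v g : E) (t : ℝ) (ht : t ≠ 0) :
    (t/2) * ‖x - (v - (1/t) • g)‖ ^ 2
      = (t/2) * ‖x - v‖ ^ 2 + ⟪x - v, g⟫ + (1/(2*t)) * ‖g‖ ^ 2 := by
  have hrw : x - (v - (1/t) • g) = (x - v) + (1/t) • g := by abel
  rw [hrw, norm_add_sq_real, real_inner_smul_right, norm_smul]
  rw [mul_pow, Real.norm_eq_abs, sq_abs]
  field_simp

lemma stmt2_inner_diff (x y v g : E) :
    ⟪x - v, g⟫ - ⟪y - v, g⟫ = ⟪x - y, g⟫ := by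
  have e : x - y = (x - v) - (y - v) := by abel
  rw [e]
  simp only [inner_sub_left]

lemma stmt2_inner_alg (gu gw x y : E) :
    ⟪gu, x - y⟫ + ⟪y - x, gw⟫ = ⟪gu - gw, x - y⟫ := by
  simp only [inner_sub_left, inner_sub_right]
  rw [real_inner_comm y gw, real_inner_comm x gw]
  ring

lemma stmt2_descent [CompleteSpace E] (h : E → ℝ) (L : ℝ) (hL : 0 ≤ L)
    (hcd : ContDiff ℝ 1 h)
    (hlip : ∀ x y : E, ‖gradient h x - gradient h y‖ ≤ L * ‖x - y‖) (x y : E) :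
    h y ≤ h x + ⟪gradient h x, y - x⟫ + L / 2 * ‖y - x‖ ^ 2 := by
  set d := y - x with hd
  have hdiff := hcd.differentiable one_ne_zero
  have hgradcont : Continuous (gradient h) := by
    have : LipschitzWith ⟨L, hL⟩ (gradient h) := by
      apply LipschitzWith.of_dist_le_mul
      intro a b
      rw [dist_eq_norm, dist_eq_norm]; exact hlip a b
    exact this.continuous
  have hder : ∀ τ : ℝ, HasDerivAt (fun τ : ℝ => h (x + τ • d))
      ⟪gradient h (x + τ • d), d⟫ τ := by
    intro τ
    have hf : HasGradientAt h (gradient h (x + τ • d)) (x + τ • d) :=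
      (hdiff _).hasGradientAt
    rw [hasGradientAt_iff_hasFDerivAt] at hf
    have hline : HasDerivAt (fun τ : ℝ => x + τ • d) d τ := by
      simpa using ((hasDerivAt_id τ).smul_const d).const_add x
    simpa [Function.comp_def] using hf.comp_hasDerivAt τ hline
  have hcont : Continuous fun τ : ℝ => ⟪gradient h (x + τ • d), d⟫ :=
    (hgradcont.comp (by continuity)).inner continuous_const
  have hcont2 : Continuous fun τ : ℝ => ⟪gradient h x, d⟫ + L * τ * ‖d‖ ^ 2 := by
    fun_prop
  have key : (∫ τ in (0:ℝ)..1, ⟪gradient h (x + τ • d), d⟫)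
      = h (x + (1:ℝ) • d) - h (x + (0:ℝ) • d) :=
    intervalIntegral.integral_eq_sub_of_hasDerivAt (fun τ _ => hder τ)
      (hcont.intervalIntegrable 0 1)
  have hbound : (∫ τ in (0:ℝ)..1, ⟪gradient h (x + τ • d), d⟫)
      ≤ ∫ τ in (0:ℝ)..1, (⟪gradient h x, d⟫ + L * τ * ‖d‖ ^ 2) := by
    apply intervalIntegral.integral_mono_on zero_le_one (hcont.intervalIntegrable 0 1)
      (hcont2.intervalIntegrable 0 1)
    intro τ hτ
    have h1 : ⟪gradient h (x + τ • d) - gradient h x, d⟫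
        ≤ ‖gradient h (x + τ • d) - gradient h x‖ * ‖d‖ := real_inner_le_norm _ _
    have h2 : ‖gradient h (x + τ • d) - gradient h x‖ ≤ L * (τ * ‖d‖) := by
      have := hlip (x + τ • d) x
      simpa [norm_smul, abs_of_nonneg hτ.1] using this
    have h3 : ⟪gradient h (x + τ • d) - gradient h x, d⟫ ≤ L * τ * ‖d‖ ^ 2 := by
      calc _ ≤ ‖gradient h (x + τ • d) - gradient h x‖ * ‖d‖ := h1
        _ ≤ L * (τ * ‖d‖) * ‖d‖ := mul_le_mul_of_nonneg_right h2 (norm_nonneg _)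
        _ = L * τ * ‖d‖ ^ 2 := by ring
    have h4 := inner_sub_left (𝕜 := ℝ) (gradient h (x + τ • d)) (gradient h x) d
    linarith [h4.symm.le, h4.le]
  have hrhs : (∫ τ in (0:ℝ)..1, (⟪gradient h x, d⟫ + L * τ * ‖d‖ ^ 2))
      = ⟪gradient h x, d⟫ + L / 2 * ‖d‖ ^ 2 := by
    have heq : (fun τ : ℝ => ⟪gradient h x, d⟫ + L * τ * ‖d‖ ^ 2)
        = fun τ : ℝ => ⟪gradient h x, d⟫ + (L * ‖d‖ ^ 2) * τ := by
      funext τ; ring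
    rw [heq, intervalIntegral.integral_add ((by fun_prop : Continuous fun _ : ℝ =>
        (⟪gradient h x, d⟫ : ℝ)).intervalIntegrable 0 1)
      ((by fun_prop : Continuous fun τ : ℝ => (L * ‖d‖ ^ 2) * τ).intervalIntegrable 0 1),
      intervalIntegral.integral_const_mul, integral_id]
    simp; ring
  have hxy : x + (1:ℝ) • d = y := by rw [hd]; abel_nf; simp
  have hx0 : x + (0:ℝ) • d = x := by simp
  rw [hxy, hx0] at key
  linarith [key, hbound, hrhs.le, hrhs.ge]

end Aux

set_option maxHeartbeats 1000000 in
/-- tighter proximal inequality in the convex case.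
Let `h : ℝ^d → ℝ` be continuously differentiable with `L_h`-Lipschitz gradient and let
`σ : ℝ^d → (−∞,∞]` be proper, lower semicontinuous, convex and bounded below.  Let `t > 0`,
`v, w ∈ dom σ` and `u⁺ ∈ prox_t^σ (v − (1/t) ∇h(w))`.  Then for every `u ∈ dom σ` and
every `s > 0`, with `g := h + σ`,
`g(u⁺) ≤ g(u) + ((L_h+s−t)/2)‖u⁺−u‖² + (t/2)‖u−v‖² − (t/2)‖u⁺−v‖² + (L_h²/(2s))‖u−w‖²`. -/
theorem stmt_2 {d : ℕ}
    (h : EuclideanSpace ℝ (Fin d) → ℝ) (Lh : ℝ) (hLh : 0 ≤ Lh)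
    (hcd : ContDiff ℝ 1 h)
    (hlip : ∀ x y : EuclideanSpace ℝ (Fin d),
      ‖gradient h x - gradient h y‖ ≤ Lh * ‖x - y‖)
    (σ : EuclideanSpace ℝ (Fin d) → EReal)
    (hproper : ∃ x, σ x ≠ ⊤) (hnobot : ∀ x, σ x ≠ ⊥)
    (hlsc : LowerSemicontinuous σ)
    (hconv : ∀ x y : EuclideanSpace ℝ (Fin d), ∀ a b : ℝ, 0 ≤ a → 0 ≤ b → a + b = 1 →
      σ (a • x + b • y) ≤ (a : EReal) * σ x + (b : EReal) * σ y)
    (hbdd : ∃ m : ℝ, ∀ x, (m : EReal) ≤ σ x)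
    (t : ℝ) (ht : 0 < t)
    (v w : EuclideanSpace ℝ (Fin d)) (hv : σ v ≠ ⊤) (hw : σ w ≠ ⊤)
    (uplus : EuclideanSpace ℝ (Fin d))
    (hprox : ∀ q : EuclideanSpace ℝ (Fin d),
      σ uplus + (((t / 2) * ‖uplus - (v - (1 / t) • gradient h w)‖ ^ 2 : ℝ) : EReal)
        ≤ σ q + (((t / 2) * ‖q - (v - (1 / t) • gradient h w)‖ ^ 2 : ℝ) : EReal))
    (u : EuclideanSpace ℝ (Fin d)) (hu : σ u ≠ ⊤) (s : ℝ) (hs : 0 < s) :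
    (h uplus : EReal) + σ uplus
      ≤ (h u : EReal) + σ u
        + ((((Lh + s - t) / 2) * ‖uplus - u‖ ^ 2 + (t / 2) * ‖u - v‖ ^ 2
            - (t / 2) * ‖uplus - v‖ ^ 2 + (Lh ^ 2 / (2 * s)) * ‖u - w‖ ^ 2 : ℝ) : EReal) := by
  obtain ⟨p, hp⟩ : ∃ p : EuclideanSpace ℝ (Fin d), p = v - (1 / t) • gradient h w :=
    ⟨_, rfl⟩
  rw [← hp] at hprox
  -- real values of σ at u and uplus
  obtain ⟨su, hsu⟩ : ∃ r : ℝ, σ u = (r : EReal) := by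
    refine ⟨(σ u).toReal, (EReal.coe_toReal hu (hnobot u)).symm⟩
  have hup_ne_top : σ uplus ≠ ⊤ := by
    intro htop
    have hthis := hprox u
    rw [htop, hsu, ← EReal.coe_add,
      EReal.top_add_of_ne_bot (EReal.coe_ne_bot _)] at hthis
    exact (EReal.coe_lt_top _).not_ge hthis
  obtain ⟨sp, hsp⟩ : ∃ r : ℝ, σ uplus = (r : EReal) := by
    refine ⟨(σ uplus).toReal, (EReal.coe_toReal hup_ne_top (hnobot uplus)).symm⟩
  -- strong prox inequality in ℝ:
  have hstrong : sp + (t/2) * ‖uplus - p‖ ^ 2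
      ≤ su + (t/2) * ‖u - p‖ ^ 2 - (t/2) * ‖uplus - u‖ ^ 2 := by
    have hstep : ∀ a : ℝ, 0 < a → a < 1 →
        sp + (t/2) * ‖uplus - p‖ ^ 2
          ≤ su + (t/2) * ‖u - p‖ ^ 2 - (1 - a) * (t/2) * ‖uplus - u‖ ^ 2 := by
      intro a ha0 ha1
      set q : EuclideanSpace ℝ (Fin d) := (1-a) • uplus + a • u with hq
      have hconvq : σ q ≤ (((1-a) * sp + a * su : ℝ) : EReal) := by
        have := hconv uplus u (1-a) a (by linarith) (by linarith) (by ring)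
        rw [hsp, hsu] at this
        calc σ q ≤ ((1-a : ℝ) : EReal) * (sp : EReal) + ((a : ℝ) : EReal) * (su : EReal) := this
          _ = (((1-a) * sp + a * su : ℝ) : EReal) := by
              rw [← EReal.coe_mul, ← EReal.coe_mul, ← EReal.coe_add]
      have hpr := hprox q
      rw [hsp] at hpr
      have hpr2 : ((sp + (t / 2) * ‖uplus - p‖ ^ 2 : ℝ) : EReal)
          ≤ (((1-a) * sp + a * su + (t / 2) * ‖q - p‖ ^ 2 : ℝ) : EReal) := by
        calc ((sp + (t / 2) * ‖uplus - p‖ ^ 2 : ℝ) : EReal)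
            = (sp : EReal) + (((t / 2) * ‖uplus - p‖ ^ 2 : ℝ) : EReal) := by
              rw [← EReal.coe_add]
          _ ≤ σ q + (((t / 2) * ‖q - p‖ ^ 2 : ℝ) : EReal) := hpr
          _ ≤ (((1-a) * sp + a * su : ℝ) : EReal) + (((t / 2) * ‖q - p‖ ^ 2 : ℝ) : EReal) := by
              exact add_le_add_left hconvq _
          _ = (((1-a) * sp + a * su + (t / 2) * ‖q - p‖ ^ 2 : ℝ) : EReal) := by
              rw [← EReal.coe_add]
      rw [EReal.coe_le_coe_iff] at hpr2
      have hnorm : ‖q - p‖ ^ 2 = (1-a) * ‖uplus - p‖ ^ 2 + a * ‖u - p‖ ^ 2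
          - a * (1-a) * ‖uplus - u‖ ^ 2 := stmt2_combo_norm uplus u p a
      rw [hnorm] at hpr2
      -- divide by a
      nlinarith [hpr2, mul_pos ha0 ht]
    -- ε-argument
    refine le_of_forall_pos_le_add ?_
    intro ε hε
    set K := ‖uplus - u‖ ^ 2 with hK
    have hK0 : 0 ≤ K := by positivity
    set a : ℝ := min (1/2) (ε / ((t/2) * K + 1)) with ha
    have hden : 0 < (t/2) * K + 1 := by positivity
    have ha0 : 0 < a := lt_min (by norm_num) (div_pos hε hden)
    have ha1 : a < 1 := lt_of_le_of_lt (min_le_left _ _) (by norm_num)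
    have hstep' := hstep a ha0 ha1
    have haK : a * ((t/2) * K) ≤ ε := by
      have h1 : a ≤ ε / ((t/2) * K + 1) := min_le_right _ _
      have h2 : a * ((t/2) * K + 1) ≤ ε := by
        rw [← le_div_iff₀ hden] at *
        exact h1
      nlinarith
    nlinarith [hstep', haK]
  -- expand the shifted norms
  have hexp_up := stmt2_shift_norm uplus v (gradient h w) t (ne_of_gt ht)
  have hexp_u := stmt2_shift_norm u v (gradient h w) t (ne_of_gt ht)
  rw [← hp] at hexp_up hexp_u
  -- descent lemma
  have hdesc := stmt2_descent h Lh hLh hcd hlip u uplus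
  -- cross term bound
  have hcross : ⟪gradient h u - gradient h w, uplus - u⟫
      ≤ (s/2) * ‖uplus - u‖ ^ 2 + (Lh^2/(2*s)) * ‖u - w‖ ^ 2 := by
    have h1 : ⟪gradient h u - gradient h w, uplus - u⟫
        ≤ ‖gradient h u - gradient h w‖ * ‖uplus - u‖ := real_inner_le_norm _ _
    have h2 : ‖gradient h u - gradient h w‖ * ‖uplus - u‖
        ≤ Lh * ‖u - w‖ * ‖uplus - u‖ :=
      mul_le_mul_of_nonneg_right (hlip u w) (norm_nonneg _)
    have h3 : Lh * ‖u - w‖ * ‖uplus - u‖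
        ≤ (s/2) * ‖uplus - u‖ ^ 2 + (Lh^2/(2*s)) * ‖u - w‖ ^ 2 := by
      have hkey : (s/2) * ‖uplus - u‖ ^ 2 + (Lh^2/(2*s)) * ‖u - w‖ ^ 2
          - Lh * ‖u - w‖ * ‖uplus - u‖
          = (s * ‖uplus - u‖ - Lh * ‖u - w‖) ^ 2 / (2*s) := by
        field_simp
        ring
      nlinarith [hkey, div_nonneg (sq_nonneg (s * ‖uplus - u‖ - Lh * ‖u - w‖))
        (by positivity : (0:ℝ) ≤ 2*s)]
    linarith
  -- inner product algebra
  have hinner : ⟪gradient h u, uplus - u⟫ + ⟪u - uplus, gradient h w⟫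
      = ⟪gradient h u - gradient h w, uplus - u⟫ := by
    exact stmt2_inner_alg (gradient h u) (gradient h w) uplus u
  -- final real inequality
  have hfin : h uplus + sp ≤ h u + su
      + (((Lh + s - t) / 2) * ‖uplus - u‖ ^ 2 + (t / 2) * ‖u - v‖ ^ 2
          - (t / 2) * ‖uplus - v‖ ^ 2 + (Lh ^ 2 / (2 * s)) * ‖u - w‖ ^ 2) := by
    have key : (t/2) * ‖u - p‖ ^ 2 - (t/2) * ‖uplus - p‖ ^ 2
        = (t/2) * ‖u - v‖ ^ 2 - (t/2) * ‖uplus - v‖ ^ 2 + ⟪u - uplus, gradient h w⟫ := by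
      have hinn : ⟪u - v, gradient h w⟫ - ⟪uplus - v, gradient h w⟫
          = ⟪u - uplus, gradient h w⟫ := stmt2_inner_diff u uplus v (gradient h w)
      linarith [hexp_up, hexp_u, hinn]
    have hsq : ‖uplus - u‖ ^ 2 = ‖u - uplus‖ ^ 2 := by rw [norm_sub_rev]
    linarith [hstrong, hdesc, hcross, hinner, key, hsq]
  -- back to EReal
  rw [hsp, hsu, ← EReal.coe_add, ← EReal.coe_add, ← EReal.coe_add]
  exact_mod_cast hfin
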